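/- Let p be a probability mass function on a finite set S of cardinality k, and let p_N be the empirical distribution of N i.i.d. samples drawn from p. Then for every ε > 0, P(‖p - p_N‖₁ ≥ ε) ≤ (2^k - 2) · exp(-N ε² / 2). -/

import Mathlib

open MeasureTheory ProbabilityTheory

open Real in
lemma hoeff_bernoulli (q t : ℝ) (hq0 : 0 ≤ q) (hq1 : q ≤ 1) (ht : 0 ≤ t) :
    q * exp (t * (1 - q)) + (1 - q) * exp (t * (0 - q)) ≤ exp (t ^ 2 / 8) := by
  set D : ℝ → ℝ := fun s => 1 - q + q * exp s with hD_def
  have hD : ∀ s, 0 < D s := by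
    intro s
    rcases eq_or_lt_of_le hq0 with h | h
    · simp [hD_def, ← h]
    · have := exp_pos s
      simp only [hD_def]
      nlinarith
  set g : ℝ → ℝ := fun s => s * q + s ^ 2 / 8 - log (D s) with hg_def
  set h : ℝ → ℝ := fun s => q + s / 4 - q * exp s / D s with hh_def
  have hDd : ∀ s, HasDerivAt D (q * exp s) s := by
    intro s
    exact ((Real.hasDerivAt_exp s).const_mul q).const_add (1 - q)
  have hgd : ∀ s, HasDerivAt g (h s) s := by
    intro s
    have hlog : HasDerivAt (fun s => log (D s)) (q * exp s / D s) s :=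
      (hDd s).log (hD s).ne'
    have : HasDerivAt (fun s => s * q + s ^ 2 / 8) (q + s / 4) s := by
      have h1 : HasDerivAt (fun s : ℝ => s * q) q s := by
        simpa using (hasDerivAt_id s).mul_const q
      have h2 : HasDerivAt (fun s : ℝ => s ^ 2 / 8) (s / 4) s := by
        have := (hasDerivAt_pow 2 s).div_const 8
        simpa [mul_comm, mul_assoc] using this.congr_deriv (by ring)
      exact h1.add h2
    exact this.sub hlog
  have hhd : ∀ s, HasDerivAt h (1 / 4 -
      (q * exp s * D s - q * exp s * (q * exp s)) / (D s) ^ 2) s := by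
    intro s
    have hdiv : HasDerivAt (fun s => q * exp s / D s)
        ((q * exp s * D s - q * exp s * (q * exp s)) / (D s) ^ 2) s :=
      ((Real.hasDerivAt_exp s).const_mul q).div (hDd s) (hD s).ne'
    have hlin : HasDerivAt (fun s : ℝ => q + s / 4) (1 / 4) s := by
      simpa using ((hasDerivAt_id s).div_const 4).const_add q
    exact hlin.sub hdiv
  have hderiv_nonneg : ∀ s, 0 ≤ 1 / 4 -
      (q * exp s * D s - q * exp s * (q * exp s)) / (D s) ^ 2 := by
    intro s
    have hDs := hD s
    have hnum : q * exp s * D s - q * exp s * (q * exp s) = (1 - q) * (q * exp s) := by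
      simp only [hD_def]; ring
    rw [hnum, sub_nonneg, div_le_iff₀ (by positivity)]
    have : D s = (1 - q) + q * exp s := rfl
    nlinarith [sq_nonneg ((1 - q) - q * exp s)]
  have hh_mono : Monotone h :=
    monotone_of_deriv_nonneg (fun s => (hhd s).differentiableAt) (by
      intro s; rw [(hhd s).deriv]; exact hderiv_nonneg s)
  have hh0 : h 0 = 0 := by simp [hh_def, hD_def]
  have hg_mono : MonotoneOn g (Set.Ici 0) := by
    refine monotoneOn_of_deriv_nonneg (convex_Ici 0)
      (Continuous.continuousOn ?_) (fun s _ => (hgd s).differentiableAt.differentiableWithinAt)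
      (fun s hs => ?_)
    · exact (continuous_id.mul continuous_const |>.add
        ((continuous_pow 2).div_const 8)).sub
        ((continuous_const.add (continuous_const.mul continuous_exp)).log
          fun s => (hD s).ne')
    · rw [(hgd s).deriv, ← hh0]
      exact hh_mono (le_of_lt (by simpa using hs))
  have hg0 : g 0 = 0 := by simp [hg_def, hD_def]
  have hgt : 0 ≤ g t := by
    rw [← hg0]; exact hg_mono (by simp) (by simpa using ht) ht
  have hlogle : log (D t) ≤ t * q + t ^ 2 / 8 := by
    simp only [hg_def] at hgt; linarith
  have hDle : D t ≤ exp (t * q + t ^ 2 / 8) := by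
    rw [← Real.exp_log (hD t)]; exact exp_le_exp.mpr hlogle
  have key : q * exp (t * (1 - q)) + (1 - q) * exp (t * (0 - q))
      = exp (-(t * q)) * D t := by
    simp only [hD_def]
    rw [show t * (1 - q) = t + -(t*q) by ring, show t * (0 - q) = -(t*q) by ring,
      Real.exp_add]
    ring
  rw [key]
  calc exp (-(t * q)) * D t ≤ exp (-(t * q)) * exp (t * q + t ^ 2 / 8) := by
        exact mul_le_mul_of_nonneg_left hDle (exp_pos _).le
    _ = exp (t ^ 2 / 8) := by rw [← Real.exp_add]; ring_nf

open Real in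
lemma per_set_bound
    {S Ω : Type*} [Fintype S] [DecidableEq S] [MeasurableSpace S]
    [MeasurableSingletonClass S] [MeasurableSpace Ω]
    (P : Measure Ω) [IsProbabilityMeasure P]
    (p : S → ℝ) (hpnn : ∀ x, 0 ≤ p x) (hpsum : ∑ x, p x = 1)
    (N : ℕ) (X : Fin N → Ω → S)
    (hmeas : ∀ i, Measurable (X i))
    (hlaw : ∀ i s, P {ω | X i ω = s} = ENNReal.ofReal (p s))
    (hindep : iIndepFun X P)
    (ε : ℝ) (hε : 0 < ε) (A : Finset S) :
    P {ω | (N : ℝ) * ε / 2 ≤ ∑ i, ((if X i ω ∈ A then (1:ℝ) else 0) - ∑ x ∈ A, p x)}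
      ≤ ENNReal.ofReal (Real.exp (-(N : ℝ) * ε ^ 2 / 2)) := by
  set q : ℝ := ∑ x ∈ A, p x with hq_def
  have hq0 : 0 ≤ q := Finset.sum_nonneg fun x _ => hpnn x
  have hq1 : q ≤ 1 := hpsum ▸ Finset.sum_le_sum_of_subset_of_nonneg
    (Finset.subset_univ A) (fun x _ _ => hpnn x)
  -- the Bernoulli variables
  set φ : S → ℝ := fun s => (if s ∈ A then (1:ℝ) else 0) - q with hφ_def
  set Z : Fin N → Ω → ℝ := fun i ω => φ (X i ω) with hZ_def
  have hφm : Measurable φ := measurable_of_countable φ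
  have hZmeas : ∀ i, Measurable (Z i) := fun i => hφm.comp (hmeas i)
  have hZindep : iIndepFun Z P :=
    hindep.comp (fun _ => φ) (fun _ => hφm)
  -- law of the event
  have hPA : ∀ i, P {ω | X i ω ∈ A} = ENNReal.ofReal q := by
    intro i
    have hset : {ω | X i ω ∈ A} = ⋃ x ∈ A, {ω | X i ω = x} := by
      ext ω; simp
    rw [hset, measure_biUnion_finset]
    · simp_rw [hlaw i]
      exact (ENNReal.ofReal_sum_of_nonneg fun x _ => hpnn x).symm
    · intro x _ y _ hxy
      simp only [Function.onFun, Set.disjoint_left]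
      intro ω hx hy
      exact hxy (hx.symm.trans hy)
    · intro x _
      exact hmeas i (measurableSet_singleton x)
  have hEmeas : ∀ i, MeasurableSet {ω | X i ω ∈ A} := by
    intro i
    exact hmeas i (Set.Finite.measurableSet (Set.toFinite _))
  -- exp (t * Z i) as indicator + const
  have hrepr : ∀ (t : ℝ) (i : Fin N), (fun ω => exp (t * Z i ω)) =
      fun ω => Set.indicator {ω | X i ω ∈ A}
        (fun _ => exp (t * (1 - q)) - exp (t * (0 - q))) ω + exp (t * (0 - q)) := by
    intro t i
    funext ω
    by_cases h : X i ω ∈ A <;>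
      simp [hZ_def, hφ_def, h, Set.indicator_apply, Set.mem_setOf_eq]
  have hint : ∀ (t : ℝ) (i : Fin N), Integrable (fun ω => exp (t * Z i ω)) P := by
    intro t i
    rw [hrepr t i]
    exact ((integrable_const _).indicator (hEmeas i)).add (integrable_const _)
  have hmgf : ∀ (t : ℝ) (i : Fin N),
      mgf (Z i) P t = q * exp (t * (1 - q)) + (1 - q) * exp (t * (0 - q)) := by
    intro t i
    rw [mgf, hrepr t i, integral_add ((integrable_const _).indicator (hEmeas i))
      (integrable_const _), integral_indicator_const _ (hEmeas i), integral_const]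
    have : (P {ω | X i ω ∈ A}).toReal = q := by
      rw [hPA i, ENNReal.toReal_ofReal hq0]
    simp [measureReal_def, this]
    ring
  -- Chernoff with t = 2ε
  set t : ℝ := 2 * ε with ht_def
  have ht0 : 0 ≤ t := by positivity
  have hintsum : Integrable (fun ω => exp (t * (∑ i, Z i) ω)) P := by
    have := hZindep.integrable_exp_mul_sum (μ := P) hZmeas
      (s := Finset.univ) (fun i _ => hint t i)
    simpa using this
  have hchern := measure_ge_le_exp_mul_mgf (X := ∑ i, Z i) (μ := P)
    ((N : ℝ) * ε / 2) ht0 hintsum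
  have hmgfsum : mgf (∑ i, Z i) P t = ∏ i : Fin N, mgf (Z i) P t :=
    hZindep.mgf_sum hZmeas (s := Finset.univ)
  have hmgfbd : mgf (∑ i, Z i) P t ≤ exp ((N : ℝ) * ε ^ 2 / 2) := by
    rw [hmgfsum]
    calc ∏ i : Fin N, mgf (Z i) P t ≤ ∏ i : Fin N, exp (t ^ 2 / 8) := by
          refine Finset.prod_le_prod (fun i _ => mgf_nonneg) (fun i _ => ?_)
          rw [hmgf t i]
          exact hoeff_bernoulli q t hq0 hq1 ht0
      _ = exp ((N : ℝ) * ε ^ 2 / 2) := by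
          rw [Finset.prod_const, ← Real.exp_nat_mul]
          congr 1
          simp [ht_def]
          ring
  have hfinal : (P {ω | (N : ℝ) * ε / 2 ≤ (∑ i, Z i) ω}).toReal
      ≤ exp (-(N : ℝ) * ε ^ 2 / 2) := by
    refine hchern.trans ?_
    calc exp (-t * ((N : ℝ) * ε / 2)) * mgf (∑ i, Z i) P t
        ≤ exp (-t * ((N : ℝ) * ε / 2)) * exp ((N : ℝ) * ε ^ 2 / 2) :=
          mul_le_mul_of_nonneg_left hmgfbd (exp_pos _).le
      _ = exp (-(N : ℝ) * ε ^ 2 / 2) := by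
          rw [← Real.exp_add]; congr 1; simp [ht_def]; ring
  have hne : P {ω | (N : ℝ) * ε / 2 ≤ (∑ i, Z i) ω} ≠ ⊤ := measure_ne_top _ _
  have : P {ω | (N : ℝ) * ε / 2 ≤ (∑ i, Z i) ω}
      ≤ ENNReal.ofReal (exp (-(N : ℝ) * ε ^ 2 / 2)) := by
    rw [← ENNReal.ofReal_toReal hne]
    exact ENNReal.ofReal_le_ofReal hfinal
  convert this using 3 with ω
  simp [hZ_def, hφ_def, ge_iff_le, Finset.sum_apply]

/-- Weissman et al. concentration inequality for the L1 deviation of the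
empirical measure of `N` i.i.d. samples from `p`. -/
theorem weissman_l1_concentration
    {S Ω : Type*} [Fintype S] [DecidableEq S] [MeasurableSpace S]
    [MeasurableSingletonClass S] [MeasurableSpace Ω]
    (P : Measure Ω) [IsProbabilityMeasure P]
    (p : S → ℝ) (hpnn : ∀ x, 0 ≤ p x) (hpsum : ∑ x, p x = 1)
    (N : ℕ) (hN : 0 < N) (X : Fin N → Ω → S)
    (hmeas : ∀ i, Measurable (X i))
    (hlaw : ∀ i s, P {ω | X i ω = s} = ENNReal.ofReal (p s))
    (hindep : iIndepFun X P)
    (ε : ℝ) (hε : 0 < ε) :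
    P {ω | ∑ x, |p x - ((Finset.univ.filter fun i => X i ω = x).card : ℝ) / N| ≥ ε}
      ≤ ENNReal.ofReal ((2 ^ (Fintype.card S) - 2) * Real.exp (-(N : ℝ) * ε ^ 2 / 2)) := by
  classical
  rcases isEmpty_or_nonempty S with hS | hS
  · have : {ω | ∑ x, |p x - ((Finset.univ.filter fun i => X i ω = x).card : ℝ) / N| ≥ ε}
        = (∅ : Set Ω) := by
      ext ω
      simp only [Set.mem_setOf_eq, Set.mem_empty_iff_false, iff_false, not_le, ge_iff_le]
      rw [Finset.sum_of_isEmpty]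
      exact hε
    rw [this]
    simp
  -- notation
  set c : Ω → S → ℝ := fun ω x => ((Finset.univ.filter fun i => X i ω = x).card : ℝ)
    with hc_def
  have hc_sum : ∀ ω, ∑ x, c ω x = N := by
    intro ω
    have := Finset.card_eq_sum_card_fiberwise
      (f := fun i => X i ω) (s := Finset.univ) (t := Finset.univ)
      (fun i _ => Finset.mem_univ _)
    simp only [Finset.card_univ, Fintype.card_fin] at this
    rw [hc_def]
    beta_reduce
    exact_mod_cast this.symm
  have hcA : ∀ (ω : Ω) (A : Finset S),
      ∑ x ∈ A, c ω x = ∑ i, (if X i ω ∈ A then (1:ℝ) else 0) := by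
    intro ω A
    simp only [hc_def, Finset.card_filter]
    push_cast
    rw [Finset.sum_comm]
    refine Finset.sum_congr rfl fun i _ => ?_
    simp [Finset.sum_ite_eq]
  set T : Finset (Finset S) :=
    ((Finset.univ : Finset S).powerset.erase ∅).erase Finset.univ with hT_def
  have hTcard : T.card = 2 ^ (Fintype.card S) - 2 := by
    rw [hT_def, Finset.card_erase_of_mem
        (Finset.mem_erase.mpr ⟨Finset.univ_nonempty.ne_empty, by simp⟩),
      Finset.card_erase_of_mem (by simp), Finset.card_powerset, Finset.card_univ]
    omega
  -- the inclusion into the union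
  have hsubset :
      {ω | ∑ x, |p x - c ω x / N| ≥ ε} ⊆
      ⋃ A ∈ T, {ω | (N : ℝ) * ε / 2 ≤ ∑ i, ((if X i ω ∈ A then (1:ℝ) else 0) - ∑ x ∈ A, p x)} := by
    intro ω hω
    simp only [Set.mem_setOf_eq, ge_iff_le] at hω
    set d : S → ℝ := fun x => c ω x / N - p x with hd_def
    have hd_sum : ∑ x, d x = 0 := by
      simp only [hd_def, Finset.sum_sub_distrib, hpsum, ← Finset.sum_div, hc_sum ω]
      field_simp
      norm_num
    set A : Finset S := Finset.univ.filter (fun x => 0 < d x) with hA_def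
    have habs : ∑ x, |p x - c ω x / N| = 2 * ∑ x ∈ A, d x := by
      have h1 : ∀ x, |p x - c ω x / N| = |d x| := by
        intro x; rw [abs_sub_comm]
      simp_rw [h1]
      rw [← Finset.sum_filter_add_sum_filter_not Finset.univ (fun x => 0 < d x) (fun x => |d x|)]
      have h2 : ∑ x ∈ Finset.univ.filter (fun x => 0 < d x), |d x| = ∑ x ∈ A, d x :=
        Finset.sum_congr rfl fun x hx => abs_of_pos (Finset.mem_filter.mp hx).2
      have h3 : ∑ x ∈ Finset.univ.filter (fun x => ¬ 0 < d x), |d x|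
          = - ∑ x ∈ Finset.univ.filter (fun x => ¬ 0 < d x), d x := by
        rw [← Finset.sum_neg_distrib]
        refine Finset.sum_congr rfl fun x hx => ?_
        exact abs_of_nonpos (le_of_not_gt (Finset.mem_filter.mp hx).2)
      have h4 := Finset.sum_filter_add_sum_filter_not Finset.univ (fun x => 0 < d x) d
      rw [← hA_def] at h4
      rw [h2, h3]
      linarith
    have hAd : ε / 2 ≤ ∑ x ∈ A, d x := by
      rw [habs] at hω; linarith
    have hApos : 0 < ∑ x ∈ A, d x := lt_of_lt_of_le (by linarith) hAd
    have hAne : A ≠ ∅ := by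
      intro h; rw [h] at hApos; simp at hApos
    have hAnu : A ≠ Finset.univ := by
      intro h; rw [h, hd_sum] at hApos; exact lt_irrefl 0 hApos
    have hAT : A ∈ T := by
      rw [hT_def]
      exact Finset.mem_erase.mpr ⟨hAnu, Finset.mem_erase.mpr ⟨hAne, Finset.mem_powerset.mpr
        (Finset.subset_univ A)⟩⟩
    refine Set.mem_biUnion hAT ?_
    simp only [Set.mem_setOf_eq]
    have hNpos : (0:ℝ) < N := by exact_mod_cast hN
    have key : ∑ i, ((if X i ω ∈ A then (1:ℝ) else 0) - ∑ x ∈ A, p x)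
        = (N : ℝ) * ∑ x ∈ A, d x := by
      rw [Finset.sum_sub_distrib, ← hcA ω A, Finset.sum_const, Finset.card_univ,
        Fintype.card_fin, nsmul_eq_mul]
      have hA' : ∑ x ∈ A, d x = (∑ x ∈ A, c ω x) / N - ∑ x ∈ A, p x := by
        simp only [hd_def, Finset.sum_sub_distrib, Finset.sum_div]
      rw [hA', mul_sub, mul_div_cancel₀ _ hNpos.ne']
    rw [key]
    calc (N : ℝ) * ε / 2 = (N : ℝ) * (ε / 2) := by ring
      _ ≤ (N : ℝ) * ∑ x ∈ A, d x := by
          exact mul_le_mul_of_nonneg_left hAd hNpos.le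
  -- union bound
  calc P {ω | ∑ x, |p x - c ω x / N| ≥ ε}
      ≤ P (⋃ A ∈ T, {ω | (N : ℝ) * ε / 2
          ≤ ∑ i, ((if X i ω ∈ A then (1:ℝ) else 0) - ∑ x ∈ A, p x)}) :=
        measure_mono hsubset
    _ ≤ ∑ A ∈ T, P {ω | (N : ℝ) * ε / 2
          ≤ ∑ i, ((if X i ω ∈ A then (1:ℝ) else 0) - ∑ x ∈ A, p x)} :=
        measure_biUnion_finset_le T _
    _ ≤ ∑ B ∈ T, ENNReal.ofReal (Real.exp (-(N : ℝ) * ε ^ 2 / 2)) :=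
        Finset.sum_le_sum fun A _ =>
          per_set_bound P p hpnn hpsum N X hmeas hlaw hindep ε hε A
    _ = (T.card : ENNReal) * ENNReal.ofReal (Real.exp (-(N : ℝ) * ε ^ 2 / 2)) := by
        rw [Finset.sum_const, nsmul_eq_mul]
    _ ≤ ENNReal.ofReal ((2 ^ (Fintype.card S) - 2) * Real.exp (-(N : ℝ) * ε ^ 2 / 2)) := by
        rw [hTcard]
        have h2 : 2 ≤ 2 ^ (Fintype.card S) := by
          have : 1 ≤ Fintype.card S := Fintype.card_pos
          calc 2 = 2 ^ 1 := rfl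
            _ ≤ 2 ^ (Fintype.card S) := Nat.pow_le_pow_right (by norm_num) this
        have hcast : ((2 ^ (Fintype.card S) - 2 : ℕ) : ℝ)
            = (2 : ℝ) ^ (Fintype.card S) - 2 := by
          push_cast [Nat.cast_sub h2]
          ring
        have hnn : (0:ℝ) ≤ (2:ℝ) ^ (Fintype.card S) - 2 := by
          rw [← hcast]; positivity
        rw [ENNReal.ofReal_mul hnn, ← hcast, ENNReal.ofReal_natCast]
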